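/- arXiv:math/0505415 — 4 statements merged into one kernel-verified Lean document; each statement's English description precedes it below -/
import Mathlib

section
/- For all integers k ≥ 1 and d ≥ 2k-1 such that 2(d-2k+1) ≡ 0 (mod k(k+1)), there are infinitely many values of n for which there exists a k-tree G on n vertices such that for every t with 0 ≤ t < k, every degree-d t-set S of G satisfies |S| ≤ ((d-2k+1)/(d-(3/2)k+1))·((t+1)/(k+1))·n + ((k-1)(t+1)(d-2k+1) + k(t+1)(k+1)) / ((d-(3/2)k+1)(k+1)). -/
/-- The degree of a vertex `v` in `G` (number of neighbours). -/
noncomputable def degN {V : Type*} (G : SimpleGraph V) (v : V) : ℕ :=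
  (G.neighborSet v).ncard

/-- `G` is a `k`-tree. This encodes the recursive definition (start with a `(k+1)`-clique and
repeatedly add a new vertex adjacent to exactly the vertices of an existing `k`-clique) via a
construction ordering `e : V ≃ Fin n`: the first `k+1` vertices form a clique, and every later
vertex is adjacent among the earlier vertices to exactly the `k` vertices of a clique `S`. -/
def IsKTree {V : Type*} (k : ℕ) (G : SimpleGraph V) : Prop :=
  ∃ (n : ℕ) (e : V ≃ Fin n),
    k + 1 ≤ n ∧
    (∀ i j : Fin n, i < j → (j : ℕ) < k + 1 → G.Adj (e.symm i) (e.symm j)) ∧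
    (∀ j : Fin n, k + 1 ≤ (j : ℕ) →
      ∃ S : Finset (Fin n), S.card = k ∧ (∀ i ∈ S, i < j) ∧
        (∀ i : Fin n, i < j → (G.Adj (e.symm i) (e.symm j) ↔ i ∈ S)) ∧
        (∀ i ∈ S, ∀ i' ∈ S, i ≠ i' → G.Adj (e.symm i) (e.symm i')))

/-- The treewidth of a graph `G`: the minimum `k` such that `G` is a spanning subgraph
of a `k`-tree. -/
noncomputable def treewidth {V : Type*} (G : SimpleGraph V) : ℕ :=
  sInf {k : ℕ | ∃ H : SimpleGraph V, IsKTree k H ∧ G ≤ H}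

namespace S11

/-- any clique in a k-tree has at most k+1 vertices -/
lemma ktree_clique_card {V : Type*} {k : ℕ} {H : SimpleGraph V} (hH : IsKTree k H)
    (C : Finset V) (hC : ∀ x ∈ C, ∀ y ∈ C, x ≠ y → H.Adj x y) : C.card ≤ k + 1 := by
  classical
  obtain ⟨N, e, hN, h1, h2⟩ := hH
  rcases C.eq_empty_or_nonempty with rfl | hne
  · simp
  set C' : Finset (Fin N) := C.image e with hC'
  have hcard : C'.card = C.card := Finset.card_image_of_injective _ e.injective
  have hne' : C'.Nonempty := hne.image e
  set j : Fin N := C'.max' hne' with hj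
  have hjC' : j ∈ C' := C'.max'_mem hne'
  have hmemC : ∀ i ∈ C', e.symm i ∈ C := by
    intro i hi
    obtain ⟨x, hx, rfl⟩ := Finset.mem_image.1 hi
    simpa using hx
  rcases lt_or_ge (j : ℕ) (k + 1) with hjk | hjk
  · -- all indices ≤ j < k+1
    have : C'.image (Fin.val) ⊆ Finset.range (k+1) := by
      intro x hx
      obtain ⟨i, hi, rfl⟩ := Finset.mem_image.1 hx
      have hle : (i:ℕ) ≤ (j:ℕ) := C'.le_max' i hi
      simp only [Finset.mem_range]
      omega

    calc C.card = (C'.image Fin.val).card := by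
          rw [Finset.card_image_of_injective _ Fin.val_injective, hcard]
      _ ≤ (Finset.range (k+1)).card := Finset.card_le_card this
      _ = k + 1 := by simp
  · obtain ⟨Sf, hScard, hSlt, hSiff, _⟩ := h2 j hjk
    have hsub : C'.erase j ⊆ Sf := by
      intro i hi
      have hij : i ≠ j := Finset.ne_of_mem_erase hi
      have hiC' : i ∈ C' := Finset.mem_of_mem_erase hi
      have hilt : i < j := lt_of_le_of_ne (C'.le_max' i hiC') hij
      have hadj : H.Adj (e.symm i) (e.symm j) := by
        apply hC _ (hmemC i hiC') _ (hmemC j hjC')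
        simp only [ne_eq, EmbeddingLike.apply_eq_iff_eq]
        exact hij
      exact (hSiff i hilt).1 hadj
    have := Finset.card_le_card hsub
    have hce := Finset.card_erase_of_mem hjC'
    omega


lemma top_isKTree {V : Type*} {s : ℕ} (hs : 1 ≤ s) (e : V ≃ Fin s) :
    IsKTree (s - 1) (⊤ : SimpleGraph V) := by
  refine ⟨s, e, by omega, ?_, ?_⟩
  · intro i j hij _
    simp only [SimpleGraph.top_adj, ne_eq, EmbeddingLike.apply_eq_iff_eq]
    exact fun h => absurd (congrArg e.symm h) (by simpa using hij.ne)
  · intro j hj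
    exact absurd j.2 (by omega)

/-- extraction from treewidth bound -/
lemma tw_extract {V : Type*} {G : SimpleGraph V} {t : ℕ}
    (hne : {k : ℕ | ∃ H : SimpleGraph V, IsKTree k H ∧ G ≤ H}.Nonempty)
    (htw : treewidth G ≤ t) :
    ∃ k' ≤ t, ∃ H : SimpleGraph V, IsKTree k' H ∧ G ≤ H := by
  have hmem := Nat.sInf_mem hne
  exact ⟨_, htw, hmem⟩

/-- the cliques-bound for a set of treewidth ≤ t -/
lemma clique_in_low_tw {n : ℕ} {G : SimpleGraph (Fin n)} {S : Finset (Fin n)} {t : ℕ}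
    (hS : S.Nonempty)
    (htw : treewidth (G.induce (S : Set (Fin n))) ≤ t)
    (C : Finset (Fin n)) (hCS : C ⊆ S)
    (hC : ∀ x ∈ C, ∀ y ∈ C, x ≠ y → G.Adj x y) : C.card ≤ t + 1 := by
  classical
  set G' := G.induce (S : Set (Fin n)) with hG'
  have e : ((S : Set (Fin n)) : Type) ≃ Fin S.card :=
    (Equiv.subtypeEquivRight (fun x => by simp)).trans S.equivFin
  have hs1 : 1 ≤ S.card := Finset.card_pos.2 hS
  have hne : {k : ℕ | ∃ H : SimpleGraph ((S : Set (Fin n)) : Type), IsKTree k H ∧ G' ≤ H}.Nonempty :=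
    ⟨S.card - 1, ⊤, top_isKTree hs1 e, le_top⟩
  obtain ⟨k', hk't, H, hH, hle⟩ := tw_extract hne htw
  -- lift C into the subtype
  set C' : Finset ((S : Set (Fin n)) : Type) :=
    Finset.univ.filter (fun x => x.1 ∈ C) with hC'
  have hcard : C'.card = C.card := by
    have himg : C'.image (Subtype.val) = C := by
      ext y
      simp only [hC', Finset.mem_image, Finset.mem_filter, Finset.mem_univ, true_and]
      constructor
      · rintro ⟨x, hx, rfl⟩; exact hx
      · intro hy; exact ⟨⟨y, by simpa using hCS hy⟩, hy, rfl⟩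
    rw [← himg, Finset.card_image_of_injective _ Subtype.val_injective]
  have : C'.card ≤ k' + 1 := by
    apply ktree_clique_card hH
    intro x hx y hy hxy
    apply hle
    simp only [hC', Finset.mem_filter] at hx hy
    exact hC x.1 hx.2 y.1 hy.2 (fun h => hxy (Subtype.ext h))
  omega
lemma twice_sum_succ (c : ℕ) : 2 * (∑ i ∈ Finset.range c, (i+1)) = c * (c+1) := by
  induction c with
  | zero => simp
  | succ n ih => rw [Finset.sum_range_succ, Nat.mul_add, ih]; ring

lemma sum_range_mul_div (f : ℕ → ℕ) (W M : ℕ) :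
    ∑ x ∈ Finset.range (W * M), f (x / M) = M * ∑ w ∈ Finset.range W, f w := by
  induction W with
  | zero => simp
  | succ n ih =>
    have h1 : (n+1) * M = n * M + M := by ring
    rw [h1, Finset.range_eq_Ico, ← Finset.sum_Ico_consecutive _ (Nat.zero_le (n*M)) (by omega),
      ← Finset.range_eq_Ico, ih, Finset.sum_Ico_eq_sum_range]
    have h2 : ∀ x ∈ Finset.range (n*M + M - n*M), f ((n*M + x) / M) = f n := by
      intro x hx
      simp only [Finset.mem_range] at hx
      have hM : 0 < M := by omega
      have : (n*M + x)/M = n := by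
        rw [Nat.add_comm, Nat.add_mul_div_right _ _ hM, Nat.div_eq_of_lt (by omega)]; omega
      rw [this]
    rw [Finset.sum_congr rfl h2, Finset.sum_const, Finset.sum_range_succ]
    simp only [Finset.card_range, smul_eq_mul]
    have : n*M + M - n*M = M := by omega
    rw [this]; ring

/-- region A arithmetic -/
lemma regA (k s M : ℤ) (hk : 1 ≤ k) (hs : 0 ≤ s) (hsk : s ≤ k - 1) (hM : 0 ≤ M) :
    4*k + M*(k*(k+1)) ≤ 2*s + 2*k + 2*(M*(k-1)+1)*(k-s) + M*((s+1)*(s+2)) := by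
  have hcons : 0 ≤ (k - s - 1) * (k - s - 2) := by
    rcases (by omega : k - s - 1 = 0 ∨ 0 ≤ k - s - 2) with h | h
    · rw [h]; simp
    · exact mul_nonneg (by omega) h
  nlinarith [mul_nonneg hM hcons, mul_nonneg hM hs]

/-- region C arithmetic -/
lemma regC (k r M Q : ℤ) (hk : 1 ≤ k) (hr : 0 ≤ r) (hrk : r ≤ k - 1) (hM : 0 ≤ M)
    (hQ : (k-1-r)*(k-r) + 2*Q = k*(k+1)) :
    4*k + M*(k*(k+1)) ≤ 2*k + 2*r + 2*(M*(k-1)+1)*(k-r) + M*(2*Q) := by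
  nlinarith [mul_nonneg hM (mul_nonneg (by omega : (0:ℤ) ≤ k - r) (by omega : (0:ℤ) ≤ k + r - 1))]

-- construction
def Ecap (k M : ℕ) : ℕ := M * (k - 1) + 1
def Tnum (k M m : ℕ) : ℕ := (m - k + 1) * M + 2 * Ecap k M
def nV (k M m : ℕ) : ℕ := m + Tnum k M m * (k + 1)
def wfun (k M m g : ℕ) : ℕ :=
  if g < Ecap k M + (m - k + 1) * M then (g - Ecap k M) / M else m - k
/-- adjacency of gadget vertex (g, j) to spine vertex s -/
def gsp (k M m g j s : ℕ) : Prop :=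
  if g < Ecap k M then s + j < k
  else wfun k M m g + j ≤ s ∧ s < wfun k M m g + k

def Arel (k M m x y : ℕ) : Prop :=
  (x < m ∧ y < m ∧ x ≠ y ∧ x ≤ y + k ∧ y ≤ x + k) ∨
  (m ≤ x ∧ m ≤ y ∧ x ≠ y ∧ (x - m) / (k+1) = (y - m) / (k+1)) ∨
  (x < m ∧ m ≤ y ∧ gsp k M m ((y-m)/(k+1)) ((y-m)%(k+1)) x) ∨
  (y < m ∧ m ≤ x ∧ gsp k M m ((x-m)/(k+1)) ((x-m)%(k+1)) y)

lemma Arel_symm {k M m x y : ℕ} (h : Arel k M m x y) : Arel k M m y x := by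
  rcases h with ⟨h1,h2,h3,h4,h5⟩ | ⟨h1,h2,h3,h4⟩ | h | h
  · exact Or.inl ⟨h2,h1,fun h => h3 h.symm,h5,h4⟩
  · exact Or.inr (Or.inl ⟨h2,h1,fun h => h3 h.symm,h4.symm⟩)
  · exact Or.inr (Or.inr (Or.inr h))
  · exact Or.inr (Or.inr (Or.inl h))

lemma Arel_irrefl {k M m x : ℕ} (h : Arel k M m x x) : False := by
  rcases h with ⟨_,_,h,_,_⟩ | ⟨_,_,h,_⟩ | ⟨h1,h2,_⟩ | ⟨h1,h2,_⟩ <;> omega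

def GG (k M m : ℕ) : SimpleGraph (Fin (nV k M m)) where
  Adj x y := Arel k M m x.1 y.1
  symm := ⟨fun _ _ h => Arel_symm h⟩
  loopless := ⟨fun _ h => Arel_irrefl h⟩

lemma m_le_nV (k M m : ℕ) : m ≤ nV k M m := Nat.le_add_right _ _

lemma enc_lt {k M m g j : ℕ} (hg : g < Tnum k M m) (hj : j ≤ k) :
    m + g * (k+1) + j < nV k M m := by
  have : g * (k+1) + j < Tnum k M m * (k+1) := by
    calc g * (k+1) + j < g * (k+1) + (k+1) := by omega
    _ = (g+1) * (k+1) := by ring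
    _ ≤ Tnum k M m * (k+1) := Nat.mul_le_mul_right _ (by omega)
  unfold nV; omega

lemma dec_g {k g j : ℕ} (hj : j ≤ k) : (g * (k+1) + j) / (k+1) = g := by
  rw [Nat.add_comm, Nat.add_mul_div_right _ _ (by omega : 0 < k+1),
    Nat.div_eq_of_lt (by omega)]; omega

lemma dec_j {k g j : ℕ} (hj : j ≤ k) : (g * (k+1) + j) % (k+1) = j := by
  rw [Nat.add_comm, Nat.add_mul_mod_self_right, Nat.mod_eq_of_lt (by omega)]

lemma decomp {k M m : ℕ} (x : ℕ) (h1 : m ≤ x) (h2 : x < nV k M m) :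
    ∃ g j, g < Tnum k M m ∧ j ≤ k ∧ x = m + g * (k+1) + j ∧
      (x - m) / (k+1) = g ∧ (x - m) % (k+1) = j := by
  set p := x - m with hp
  refine ⟨p / (k+1), p % (k+1), ?_, ?_, ?_, rfl, rfl⟩
  · have hplt : p < Tnum k M m * (k+1) := by unfold nV at h2; omega
    exact Nat.div_lt_of_lt_mul (by rw [Nat.mul_comm]; omega)
  · have := Nat.mod_lt p (by omega : 0 < k+1); omega
  · have h := Nat.div_add_mod p (k+1)
    rw [Nat.mul_comm] at h
    omega

lemma wfun_le {k M m : ℕ} (hkm : k ≤ m) (g : ℕ) : wfun k M m g ≤ m - k := by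
  unfold wfun
  split
  · rename_i h
    rcases Nat.eq_zero_or_pos M with rfl | hM
    · simp
    · have hpos : 1 * 1 ≤ (m - k + 1) * M := Nat.mul_le_mul (by omega) hM
      have h2 : g - Ecap k M < M * (m - k + 1) := by rw [Nat.mul_comm]; omega
      have := Nat.div_lt_of_lt_mul h2
      omega
  · omega

lemma div_of_between {k g jj x mm : ℕ} (h1 : mm + g*(k+1) ≤ x) (h2 : x < mm + g*(k+1) + jj)
    (hjj : jj ≤ k) :
    (x - mm)/(k+1) = g ∧ (x - mm) % (k+1) = x - (mm + g*(k+1)) ∧ x - (mm + g*(k+1)) < jj := by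
  have hl : x - mm = g*(k+1) + (x - (mm+g*(k+1))) := by omega
  have hlk : x - (mm+g*(k+1)) < jj := by omega
  rw [hl, dec_g (by omega), dec_j (by omega)]
  exact ⟨rfl, rfl, hlk⟩

lemma GG_isKTree {k M m : ℕ} (hk : 1 ≤ k) (hm : 2*k+2 ≤ m) : IsKTree k (GG k M m) := by
  have hmn := m_le_nV k M m
  refine ⟨nV k M m, Equiv.refl _, by omega, ?_, ?_⟩
  · intro i j hij hjk
    have hij' : i.1 < j.1 := hij
    have hjk' : j.1 < k + 1 := hjk
    show Arel k M m i.1 j.1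
    exact Or.inl ⟨by omega, by omega, by omega, by omega, by omega⟩
  · intro j hj
    simp only [Equiv.refl_symm, Equiv.refl_apply]
    have hj' : k + 1 ≤ j.1 := hj
    by_cases hjm : j.1 < m
    · -- spine vertex
      refine ⟨(Finset.Ico (j.1 - k) j.1).attachFin
        (fun x hx => by simp only [Finset.mem_Ico] at hx; omega), ?_, ?_, ?_, ?_⟩
      · rw [Finset.card_attachFin, Nat.card_Ico]; omega
      · intro i hi
        rw [Finset.mem_attachFin, Finset.mem_Ico] at hi
        exact (Fin.lt_def.2 (by omega))
      · intro i hij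
        have hij' : i.1 < j.1 := hij
        rw [Finset.mem_attachFin, Finset.mem_Ico]
        constructor
        · intro had
          rcases had with ⟨_,_,_,_,h5⟩ | ⟨h1,_⟩ | ⟨_,h2,_⟩ | ⟨_,h2,_⟩ <;> omega
        · intro hmem
          exact Or.inl ⟨by omega, by omega, by omega, by omega, by omega⟩
      · intro i hi i' hi' hne
        rw [Finset.mem_attachFin, Finset.mem_Ico] at hi hi'
        have hne' : i.1 ≠ i'.1 := fun h => hne (Fin.ext h)
        exact Or.inl ⟨by omega, by omega, hne', by omega, by omega⟩
    · -- gadget vertex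
      push_neg at hjm
      obtain ⟨g, jj, hg, hjj, hrep, hdg, hdj⟩ := decomp j.1 hjm j.2
      have hwle := wfun_le (k := k) (M := M) (m := m) (by omega) g
      set b : ℕ := if g < Ecap k M then 0 else wfun k M m g + jj with hb
      have hbm : b + (k - jj) ≤ m := by
        rw [hb]; split <;> omega
      set Snat : Finset ℕ :=
        Finset.Ico b (b + (k - jj)) ∪ Finset.Ico (m + g*(k+1)) (m + g*(k+1) + jj) with hSnat
      have hSlt : ∀ x ∈ Snat, x < nV k M m := by
        intro x hx
        rw [hSnat, Finset.mem_union, Finset.mem_Ico, Finset.mem_Ico] at hx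
        rcases hx with hx | hx
        · omega
        · have := j.2; omega
      refine ⟨Snat.attachFin hSlt, ?_, ?_, ?_, ?_⟩
      · rw [Finset.card_attachFin, hSnat, Finset.card_union_of_disjoint, Nat.card_Ico,
          Nat.card_Ico]
        · omega
        · rw [Finset.disjoint_left]
          intro a ha ha'
          rw [Finset.mem_Ico] at ha ha'
          omega
      · intro i hi
        rw [Finset.mem_attachFin, hSnat, Finset.mem_union, Finset.mem_Ico, Finset.mem_Ico] at hi
        refine Fin.lt_def.2 ?_
        rcases hi with hi | hi <;> omega
      · intro i hij
        have hij' : i.1 < j.1 := hij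
        rw [Finset.mem_attachFin, hSnat, Finset.mem_union, Finset.mem_Ico, Finset.mem_Ico]
        by_cases him : i.1 < m
        · constructor
          · intro had
            rcases had with ⟨_,hy,_⟩ | ⟨h1,_⟩ | ⟨_,_,hgsp⟩ | ⟨_,h2,_⟩
            · omega
            · omega
            · rw [hdg, hdj] at hgsp
              unfold gsp at hgsp
              left
              rw [hb]
              split at hgsp
              · rename_i hgE; rw [if_pos hgE]; omega
              · rename_i hgE; rw [if_neg hgE]; omega
            · omega
          · intro hmem
            have hmem' : b ≤ i.1 ∧ i.1 < b + (k - jj) := by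
              rcases hmem with h | h
              · exact h
              · omega
            refine Or.inr (Or.inr (Or.inl ⟨him, by omega, ?_⟩))
            rw [hdg, hdj]
            unfold gsp
            rw [hb] at hmem'
            split
            · rename_i hgE; rw [if_pos hgE] at hmem'; omega
            · rename_i hgE; rw [if_neg hgE] at hmem'; omega
        · push_neg at him
          obtain ⟨g', jj', hg', hjj', hrep', hdg', hdj'⟩ := decomp i.1 him i.2
          constructor
          · intro had
            rcases had with ⟨h1,_⟩ | ⟨_,_,_,heq⟩ | ⟨h1,_⟩ | ⟨_,h2,_⟩
            · omega
            · rw [hdg', hdg] at heq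
              subst heq
              right
              omega
            · omega
            · omega
          · intro hmem
            have hmem' : m + g*(k+1) ≤ i.1 ∧ i.1 < m + g*(k+1) + jj := by
              rcases hmem with h | h
              · omega
              · exact h
            obtain ⟨hq1, hq2, hq3⟩ := div_of_between hmem'.1 hmem'.2 hjj
            refine Or.inr (Or.inl ⟨him, hjm, by omega, ?_⟩)
            rw [hdg, hq1]
      · intro i hi i' hi' hne
        rw [Finset.mem_attachFin, hSnat, Finset.mem_union, Finset.mem_Ico, Finset.mem_Ico] at hi hi'
        have hne' : i.1 ≠ i'.1 := fun h => hne (Fin.ext h)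
        rcases hi with hi | hi <;> rcases hi' with hi' | hi'
        · exact Or.inl ⟨by omega, by omega, hne', by omega, by omega⟩
        · -- i spine, i' gadget
          obtain ⟨hq1, hq2, hq3⟩ := div_of_between hi'.1 hi'.2 hjj
          refine Or.inr (Or.inr (Or.inl ⟨by omega, by omega, ?_⟩))
          rw [hq1, hq2]
          unfold gsp
          rw [hb] at hi
          split
          · rename_i hgE; rw [if_pos hgE] at hi; omega
          · rename_i hgE; rw [if_neg hgE] at hi; omega
        · -- i gadget, i' spine
          obtain ⟨hq1, hq2, hq3⟩ := div_of_between hi.1 hi.2 hjj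
          refine Or.inr (Or.inr (Or.inr ⟨by omega, by omega, ?_⟩))
          rw [hq1, hq2]
          unfold gsp
          rw [hb] at hi'
          split
          · rename_i hgE; rw [if_pos hgE] at hi'; omega
          · rename_i hgE; rw [if_neg hgE] at hi'; omega
        · -- both gadget
          obtain ⟨hq1, hq2, hq3⟩ := div_of_between hi.1 hi.2 hjj
          obtain ⟨hr1, hr2, hr3⟩ := div_of_between hi'.1 hi'.2 hjj
          refine Or.inr (Or.inl ⟨by omega, by omega, hne', ?_⟩)
          rw [hq1, hr1]

def cntA (k s w : ℕ) : ℕ := if w ≤ s ∧ s < w + k then s - w + 1 else 0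
def cnt (k M m g s : ℕ) : ℕ := if g < Ecap k M then k - s else cntA k s (wfun k M m g)

lemma sum_cnt (k M m s : ℕ) :
    ∑ g ∈ Finset.range (Tnum k M m), cnt k M m g s
      = Ecap k M * (k - s) + M * (∑ w ∈ Finset.range (m-k+1), cntA k s w)
        + Ecap k M * cntA k s (m-k) := by
  set E := Ecap k M with hE
  set W := m - k + 1 with hW
  have hT : Tnum k M m = W * M + 2 * E := rfl
  have hWM : W * M = (m - k + 1) * M := by rw [hW]
  have h1 : E ≤ E + W * M := Nat.le_add_right _ _
  have h2 : E + W * M ≤ Tnum k M m := by omega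
  rw [Finset.range_eq_Ico,
    ← Finset.sum_Ico_consecutive _ (Nat.zero_le E) (le_trans h1 h2),
    ← Finset.sum_Ico_consecutive _ h1 h2]
  have p1 : ∑ g ∈ Finset.Ico 0 E, cnt k M m g s = E * (k - s) := by
    rw [← Finset.range_eq_Ico]
    have hc : ∀ g ∈ Finset.range E, cnt k M m g s = k - s := by
      intro g hg
      rw [Finset.mem_range] at hg
      unfold cnt
      rw [if_pos (by omega)]
    rw [Finset.sum_congr rfl hc, Finset.sum_const, Finset.card_range, smul_eq_mul]
  have p2 : ∑ g ∈ Finset.Ico E (E + W * M), cnt k M m g s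
      = M * (∑ w ∈ Finset.range W, cntA k s w) := by
    rw [Finset.sum_Ico_eq_sum_range]
    have hww : E + W * M - E = W * M := by omega
    rw [hww]
    have hc : ∀ x ∈ Finset.range (W * M), cnt k M m (E + x) s = cntA k s (x / M) := by
      intro x hx
      rw [Finset.mem_range] at hx
      unfold cnt
      rw [if_neg (by omega)]
      unfold wfun
      rw [if_pos (by omega : E + x < Ecap k M + (m - k + 1) * M)]
      have hxx : E + x - Ecap k M = x := by omega
      rw [hxx]
    rw [Finset.sum_congr rfl hc]
    exact sum_range_mul_div (fun w => cntA k s w) W M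
  have p3 : ∑ g ∈ Finset.Ico (E + W * M) (Tnum k M m), cnt k M m g s
      = E * cntA k s (m - k) := by
    have hc : ∀ g ∈ Finset.Ico (E + W * M) (Tnum k M m), cnt k M m g s = cntA k s (m - k) := by
      intro g hg
      rw [Finset.mem_Ico] at hg
      unfold cnt
      rw [if_neg (by omega)]
      unfold wfun
      rw [if_neg (by omega : ¬ (g < Ecap k M + (m - k + 1) * M))]
    rw [Finset.sum_congr rfl hc, Finset.sum_const, Nat.card_Ico]
    have : Tnum k M m - (E + W * M) = E := by omega
    rw [this, smul_eq_mul]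
  rw [p1, p2, p3, Finset.range_eq_Ico]; omega

lemma sum_cntA_ge {k m s : ℕ} (a b : ℕ) (hab : a ≤ b) (hbk : b ≤ k) (hbs : b ≤ s + 1)
    (hsm : s ≤ m - k + a) :
    ∑ i ∈ Finset.Ico a b, (i+1) ≤ ∑ w ∈ Finset.range (m-k+1), cntA k s w := by
  have hstep : ∀ i ∈ Finset.Ico a b, cntA k s (s - i) = i + 1 := by
    intro i hi
    rw [Finset.mem_Ico] at hi
    unfold cntA
    rw [if_pos ⟨by omega, by omega⟩]
    omega
  calc ∑ i ∈ Finset.Ico a b, (i+1)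
      = ∑ i ∈ Finset.Ico a b, cntA k s (s - i) := (Finset.sum_congr rfl hstep).symm
    _ = ∑ w ∈ (Finset.Ico a b).image (fun i => s - i), cntA k s w := by
        rw [Finset.sum_image (fun x hx y hy hxy => by
          rw [Finset.mem_coe, Finset.mem_Ico] at hx hy
          omega)]
    _ ≤ ∑ w ∈ Finset.range (m-k+1), cntA k s w := by
        apply Finset.sum_le_sum_of_subset
        intro w hw
        rw [Finset.mem_image] at hw
        obtain ⟨i, hi, rfl⟩ := hw
        rw [Finset.mem_Ico] at hi
        rw [Finset.mem_range]
        omega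

lemma gsp_of_lt_cnt {k M m g s j : ℕ} (h : j < cnt k M m g s) : gsp k M m g j s ∧ j ≤ k := by
  unfold cnt at h
  unfold gsp
  split at h <;> rename_i hgE
  · rw [if_pos hgE]; omega
  · rw [if_neg hgE]
    unfold cntA at h
    split at h
    · rename_i hc
      obtain ⟨hc1, hc2⟩ := hc
      exact ⟨⟨by omega, hc2⟩, by omega⟩
    · omega

set_option maxHeartbeats 2000000 in
lemma spine_deg {k M m d : ℕ} (hk : 1 ≤ k) (hm : 2*k+2 ≤ m)
    (hd : 2*k ≤ d + 1) (hM : 2*(d+1-2*k) = M*(k*(k+1))) (s : ℕ) (hs : s < m) :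
    d + 1 ≤ degN (GG k M m) ⟨s, lt_of_lt_of_le hs (m_le_nV k M m)⟩ := by
  classical
  have hmn := m_le_nV k M m
  set F : Finset ℕ :=
    (Finset.Ico (s - k) s ∪ Finset.Ico (s+1) (min (s+1+k) m)) ∪
    (Finset.range (Tnum k M m)).biUnion
      (fun g => (Finset.range (cnt k M m g s)).image (fun j => m + g*(k+1)+j)) with hF
  have hFlt : ∀ x ∈ F, x < nV k M m := by
    intro x hx
    rw [hF, Finset.mem_union, Finset.mem_union, Finset.mem_Ico, Finset.mem_Ico] at hx
    rcases hx with (hx|hx)|hx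
    · omega
    · omega
    · rw [Finset.mem_biUnion] at hx
      obtain ⟨g, hg, hxg⟩ := hx
      rw [Finset.mem_range] at hg
      rw [Finset.mem_image] at hxg
      obtain ⟨j, hj, rfl⟩ := hxg
      rw [Finset.mem_range] at hj
      exact enc_lt hg (gsp_of_lt_cnt hj).2
  have hadj : ∀ x ∈ F, Arel k M m s x := by
    intro x hx
    rw [hF, Finset.mem_union, Finset.mem_union, Finset.mem_Ico, Finset.mem_Ico] at hx
    rcases hx with (hx|hx)|hx
    · exact Or.inl ⟨hs, by omega, by omega, by omega, by omega⟩
    · exact Or.inl ⟨hs, by omega, by omega, by omega, by omega⟩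
    · rw [Finset.mem_biUnion] at hx
      obtain ⟨g, hg, hxg⟩ := hx
      rw [Finset.mem_range] at hg
      rw [Finset.mem_image] at hxg
      obtain ⟨j, hj, rfl⟩ := hxg
      rw [Finset.mem_range] at hj
      obtain ⟨hgsp, hjk⟩ := gsp_of_lt_cnt hj
      refine Or.inr (Or.inr (Or.inl ⟨hs, by omega, ?_⟩))
      have h1 : m + g*(k+1) + j - m = g*(k+1) + j := by omega
      rw [h1, dec_g hjk, dec_j hjk]
      exact hgsp
  have hbcard : ((Finset.range (Tnum k M m)).biUnion
      (fun g => (Finset.range (cnt k M m g s)).image (fun j => m + g*(k+1)+j))).card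
      = ∑ g ∈ Finset.range (Tnum k M m), cnt k M m g s := by
    rw [Finset.card_biUnion]
    · apply Finset.sum_congr rfl
      intro g _
      rw [Finset.card_image_of_injective _ (fun a b hab => by omega), Finset.card_range]
    · intro g hg g' hg' hne
      simp only [Function.onFun]
      rw [Finset.disjoint_left]
      intro x hxg hxg'
      rw [Finset.mem_image] at hxg hxg'
      obtain ⟨j, hj, rfl⟩ := hxg
      obtain ⟨j', hj', heq⟩ := hxg'
      rw [Finset.mem_range] at hj hj'
      have h1 := (gsp_of_lt_cnt hj).2
      have h2 := (gsp_of_lt_cnt hj').2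
      apply hne
      have e1 : (g'*(k+1)+j')/(k+1) = g' := dec_g h2
      have e2 : (g*(k+1)+j)/(k+1) = g := dec_g h1
      have e3 : g'*(k+1)+j' = g*(k+1)+j := by omega
      rw [e3, e2] at e1
      omega
  have hcard : (s - (s-k)) + (min (s+1+k) m - (s+1))
      + ∑ g ∈ Finset.range (Tnum k M m), cnt k M m g s = F.card := by
    rw [hF, Finset.card_union_of_disjoint, Finset.card_union_of_disjoint, hbcard,
      Nat.card_Ico, Nat.card_Ico]
    · rw [Finset.disjoint_left]
      intro x hx hx'
      rw [Finset.mem_Ico] at hx hx'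
      omega
    · rw [Finset.disjoint_left]
      intro x hx hx'
      rw [Finset.mem_union, Finset.mem_Ico, Finset.mem_Ico] at hx
      rw [Finset.mem_biUnion] at hx'
      obtain ⟨g, hg, hxg⟩ := hx'
      rw [Finset.mem_image] at hxg
      obtain ⟨j, hj, rfl⟩ := hxg
      omega
  have hdeg : F.card ≤ degN (GG k M m) ⟨s, lt_of_lt_of_le hs hmn⟩ := by
    rw [degN]
    have hsub : ((F.attachFin hFlt : Finset (Fin (nV k M m))) : Set (Fin (nV k M m)))
        ⊆ (GG k M m).neighborSet ⟨s, lt_of_lt_of_le hs hmn⟩ := by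
      intro y hy
      rw [Finset.mem_coe, Finset.mem_attachFin] at hy
      exact hadj y.1 hy
    calc F.card = (F.attachFin hFlt).card := (Finset.card_attachFin _ _).symm
      _ = ((F.attachFin hFlt : Finset (Fin (nV k M m))) : Set (Fin (nV k M m))).ncard :=
          (Set.ncard_coe_finset _).symm
      _ ≤ _ := Set.ncard_le_ncard hsub (Set.toFinite _)
  rw [sum_cnt] at hcard
  have hEe : Ecap k M = M*(k-1)+1 := rfl
  have heq2 : 2*(d+1) = M*(k*(k+1)) + 4*k := by omega
  have hnum : d + 1 ≤ (s - (s-k)) + (min (s+1+k) m - (s+1))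
      + (Ecap k M * (k - s) + M * (∑ w ∈ Finset.range (m-k+1), cntA k s w)
         + Ecap k M * cntA k s (m-k)) := by
    rcases lt_or_ge s k with hsA | hsBC
    · -- region A
      have hsum := sum_cntA_ge (k:=k) (m:=m) (s:=s) 0 (s+1)
        (by omega) (by omega) (by omega) (by omega)
      rw [← Finset.range_eq_Ico] at hsum
      have htw := twice_sum_succ (s+1)
      set Sw := ∑ w ∈ Finset.range (m-k+1), cntA k s w with hSw
      set Q := ∑ i ∈ Finset.range (s+1), (i+1) with hQdef
      have key : d + 1 ≤ s + k + ((M*(k-1)+1) * (k - s) + M * Sw) := by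
        zify [show s ≤ k from by omega, show 1 ≤ k from hk]
        have htwz : (2:ℤ)*Q = ((s:ℤ)+1)*((s:ℤ)+2) := by exact_mod_cast htw
        have hsumz : (Q:ℤ) ≤ (Sw:ℤ) := by exact_mod_cast hsum
        have heqz : (2:ℤ)*((d:ℤ)+1) = (M:ℤ)*((k:ℤ)*((k:ℤ)+1)) + 4*(k:ℤ) := by exact_mod_cast heq2
        have hz := regA (k:ℤ) (s:ℤ) (M:ℤ) (by exact_mod_cast hk) (by positivity)
          (by omega) (by positivity)
        have hMQ : (M:ℤ) * (((s:ℤ)+1)*((s:ℤ)+2)) ≤ 2*((M:ℤ)*(Sw:ℤ)) := by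
          nlinarith [mul_le_mul_of_nonneg_left hsumz (show (0:ℤ) ≤ (M:ℤ) by positivity)]
        linarith
      rw [hEe]
      omega
    rcases lt_or_ge s (m-k) with hsB | hsC
    · -- region B
      have hsum := sum_cntA_ge (k:=k) (m:=m) (s:=s) 0 k
        (by omega) (by omega) (by omega) (by omega)
      rw [← Finset.range_eq_Ico] at hsum
      have htw := twice_sum_succ k
      set Sw := ∑ w ∈ Finset.range (m-k+1), cntA k s w with hSw
      set Q := ∑ i ∈ Finset.range k, (i+1) with hQdef
      have key : d + 1 ≤ k + k + M * Sw := by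
        zify
        have htwz : (2:ℤ)*Q = ((k:ℤ))*((k:ℤ)+1) := by exact_mod_cast htw
        have hsumz : (Q:ℤ) ≤ (Sw:ℤ) := by exact_mod_cast hsum
        have heqz : (2:ℤ)*((d:ℤ)+1) = (M:ℤ)*((k:ℤ)*((k:ℤ)+1)) + 4*(k:ℤ) := by exact_mod_cast heq2
        have hMQ : (M:ℤ) * (((k:ℤ))*((k:ℤ)+1)) ≤ 2*((M:ℤ)*(Sw:ℤ)) := by
          nlinarith [mul_le_mul_of_nonneg_left hsumz (show (0:ℤ) ≤ (M:ℤ) by positivity)]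
        linarith
      omega
    · -- region C
      set r := m - 1 - s with hrdef
      set a := k - 1 - r with hadef
      have hsum := sum_cntA_ge (k:=k) (m:=m) (s:=s) a k
        (by omega) (by omega) (by omega) (by omega)
      have hsplit : ∑ i ∈ Finset.Ico 0 a, (i+1) + ∑ i ∈ Finset.Ico a k, (i+1)
          = ∑ i ∈ Finset.Ico 0 k, (i+1) :=
        Finset.sum_Ico_consecutive _ (Nat.zero_le a) (by omega)
      rw [← Finset.range_eq_Ico, ← Finset.range_eq_Ico] at hsplit
      have htwa := twice_sum_succ a
      have htwk := twice_sum_succ k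
      set Sw := ∑ w ∈ Finset.range (m-k+1), cntA k s w with hSw
      set Q := ∑ i ∈ Finset.Ico a k, (i+1) with hQdef
      have hseq : a*(a+1) + 2*Q = k*(k+1) := by omega
      have hcnt : cntA k s (m-k) = k - r := by
        unfold cntA
        rw [if_pos ⟨by omega, by omega⟩]
        omega
      have key : d + 1 ≤ k + r + (M * Sw + (M*(k-1)+1) * (k - r)) := by
        zify [show r ≤ k from by omega, show 1 ≤ k from hk]
        have h1 : ((a:ℤ))*((a:ℤ)+1) + 2*(Q:ℤ) = (k:ℤ)*((k:ℤ)+1) := by exact_mod_cast hseq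
        have h2 : (a:ℤ) = (k:ℤ) - 1 - (r:ℤ) := by omega
        have hseqz : ((k:ℤ)-1-(r:ℤ))*((k:ℤ)-(r:ℤ)) + 2*(Q:ℤ) = (k:ℤ)*((k:ℤ)+1) := by
          linear_combination h1 + (-((k:ℤ)-(r:ℤ)) - (a:ℤ)) * h2
        have hsumz : (Q:ℤ) ≤ (Sw:ℤ) := by exact_mod_cast hsum
        have heqz : (2:ℤ)*((d:ℤ)+1) = (M:ℤ)*((k:ℤ)*((k:ℤ)+1)) + 4*(k:ℤ) := by exact_mod_cast heq2
        have hz := regC (k:ℤ) (r:ℤ) (M:ℤ) (Q:ℤ) (by exact_mod_cast hk) (by positivity)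
          (by omega) (by positivity) hseqz
        have hMQ : (M:ℤ) * (2*(Q:ℤ)) ≤ 2*((M:ℤ)*(Sw:ℤ)) := by
          nlinarith [mul_le_mul_of_nonneg_left hsumz (show (0:ℤ) ≤ (M:ℤ) by positivity)]
        linarith
      rw [hEe, hcnt]
      omega
  omega

lemma card_bound {k M m t d : ℕ} (hk : 1 ≤ k) (hm : 2*k+2 ≤ m) (hd : 2*k ≤ d+1)
    (hM : 2*(d+1-2*k) = M*(k*(k+1))) (ht : t < k)
    (S : Finset (Fin (nV k M m)))
    (hdeg : ∀ v ∈ S, degN (GG k M m) v ≤ d)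
    (htw : treewidth ((GG k M m).induce (S : Set (Fin (nV k M m)))) ≤ t) :
    S.card ≤ Tnum k M m * (t+1) := by
  classical
  have hSgad : ∀ v ∈ S, m ≤ v.1 := by
    intro v hv
    by_contra hlt
    push_neg at hlt
    have hsd := spine_deg (M:=M) hk hm hd hM v.1 hlt
    have hveq : (⟨v.1, lt_of_lt_of_le hlt (m_le_nV k M m)⟩ : Fin (nV k M m)) = v :=
      Fin.ext rfl
    rw [hveq] at hsd
    have := hdeg v hv
    omega
  rcases S.eq_empty_or_nonempty with rfl | hne
  · simp
  have hcover : S = (Finset.range (Tnum k M m)).biUnion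
      (fun g => S.filter (fun x => (x.1 - m)/(k+1) = g)) := by
    ext x
    simp only [Finset.mem_biUnion, Finset.mem_range, Finset.mem_filter]
    constructor
    · intro hx
      obtain ⟨g, j, hg, hj, hrep, hdg, hdj⟩ := decomp x.1 (hSgad x hx) x.2
      exact ⟨g, hg, hx, hdg⟩
    · rintro ⟨g, _, hx, _⟩; exact hx
  have hper : ∀ g, (S.filter (fun x => (x.1 - m)/(k+1) = g)).card ≤ t + 1 := by
    intro g
    apply clique_in_low_tw hne htw
    · exact Finset.filter_subset _ _
    · intro x hx y hy hxy
      rw [Finset.mem_filter] at hx hy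
      show Arel k M m x.1 y.1
      refine Or.inr (Or.inl ⟨hSgad x hx.1, hSgad y hy.1, fun h => hxy (Fin.ext h), ?_⟩)
      rw [hx.2, hy.2]
  calc S.card = ((Finset.range (Tnum k M m)).biUnion
        (fun g => S.filter (fun x => (x.1 - m)/(k+1) = g))).card := by rw [← hcover]
    _ ≤ ∑ g ∈ Finset.range (Tnum k M m), (S.filter (fun x => (x.1-m)/(k+1) = g)).card :=
        Finset.card_biUnion_le
    _ ≤ ∑ _g ∈ Finset.range (Tnum k M m), (t+1) := Finset.sum_le_sum (fun g _ => hper g)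
    _ = Tnum k M m * (t+1) := by rw [Finset.sum_const, Finset.card_range, smul_eq_mul]

lemma real_id {k M m d t : ℕ} (hk : 1 ≤ k) (hm : 2*k+2 ≤ m) (hd : 2*k ≤ d+1)
    (hM : 2*(d+1-2*k) = M*(k*(k+1))) :
    ((Tnum k M m * (t+1) : ℕ) : ℝ) =
      (((d : ℝ) - 2*(k:ℝ) + 1) / ((d : ℝ) - (3/2)*(k:ℝ) + 1)) * (((t:ℝ)+1)/((k:ℝ)+1)) * ((nV k M m : ℕ) : ℝ)
        + (((k:ℝ) - 1) * ((t:ℝ)+1) * ((d:ℝ) - 2*(k:ℝ) + 1) + (k:ℝ) * ((t:ℝ)+1) * ((k:ℝ)+1))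
            / ((((d:ℝ) - (3/2)*(k:ℝ) + 1)) * ((k:ℝ)+1)) := by
  have hk1 : (1:ℝ) ≤ (k:ℝ) := by exact_mod_cast hk
  have hM0 : (0:ℝ) ≤ (M:ℝ) := by positivity
  have hdr : (d:ℝ) = 2*(k:ℝ) - 1 + (M:ℝ)*(k:ℝ)*((k:ℝ)+1)/2 := by
    have hc : ((2*(d+1-2*k) : ℕ) : ℝ) = ((M*(k*(k+1)) : ℕ) : ℝ) := by exact_mod_cast hM
    rw [Nat.cast_mul, Nat.cast_sub (by omega : 2*k ≤ d+1)] at hc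
    push_cast at hc
    linarith
  have hT : ((Tnum k M m : ℕ) : ℝ) = ((m:ℝ) - (k:ℝ) + 1)*(M:ℝ) + 2*((M:ℝ)*((k:ℝ)-1)+1) := by
    unfold Tnum Ecap
    push_cast [Nat.cast_sub (show k ≤ m by omega), Nat.cast_sub (show 1 ≤ k from hk)]
    ring
  have hn : ((nV k M m : ℕ):ℝ) = (m:ℝ) + ((Tnum k M m : ℕ):ℝ)*((k:ℝ)+1) := by
    unfold nV
    push_cast
    ring
  have hden : (0:ℝ) < (d:ℝ) - (3/2)*(k:ℝ) + 1 := by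
    rw [hdr]
    nlinarith [mul_nonneg (mul_nonneg hM0 (by linarith : (0:ℝ) ≤ (k:ℝ))) (by linarith : (0:ℝ) ≤ (k:ℝ)+1)]
  have hden' : ((d:ℝ) - (3/2)*(k:ℝ) + 1) ≠ 0 := ne_of_gt hden
  have hkne : ((k:ℝ) + 1) ≠ 0 := by positivity
  rw [Nat.cast_mul, div_mul_div_comm, div_mul_eq_mul_div, ← add_div,
    eq_div_iff (mul_ne_zero hden' hkne), hn, hT, hdr]
  push_cast
  ring

end S11

/-- For all integers `k ≥ 1` and `d ≥ 2k-1` with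
`2(d-2k+1) ≡ 0 (mod k(k+1))`, there are infinitely many `n` for which there exists a `k`-tree
`G` on `n` vertices such that for every `0 ≤ t < k`, every degree-`d` `t`-set `S` of `G`
satisfies
`|S| ≤ ((d-2k+1)/(d-(3/2)k+1))·((t+1)/(k+1))·n
      + ((k-1)(t+1)(d-2k+1) + k(t+1)(k+1)) / ((d-(3/2)k+1)(k+1))`. -/
theorem stmt11 (k d : ℕ) (hk : 1 ≤ k) (hd : 2 * k ≤ d + 1)
    (hdvd : k * (k + 1) ∣ 2 * (d + 1 - 2 * k)) :
    {n : ℕ | ∃ G : SimpleGraph (Fin n), IsKTree k G ∧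
      ∀ t : ℕ, t < k → ∀ S : Finset (Fin n),
        (∀ v ∈ S, degN G v ≤ d) →
        treewidth (G.induce (S : Set (Fin n))) ≤ t →
        (S.card : ℝ) ≤
          (((d : ℝ) - 2 * k + 1) / ((d : ℝ) - (3 / 2) * k + 1)) * (((t : ℝ) + 1) / (k + 1)) * n
            + (((k : ℝ) - 1) * (t + 1) * ((d : ℝ) - 2 * k + 1) + (k : ℝ) * (t + 1) * (k + 1))
                / ((((d : ℝ) - (3 / 2) * k + 1)) * (k + 1))}.Infinite := by
  obtain ⟨M, hM⟩ := hdvd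
  have hM' : 2*(d+1-2*k) = M*(k*(k+1)) := by rw [hM]; ring
  apply Set.infinite_of_injective_forall_mem
    (f := fun i : ℕ => S11.nV k M (2*k+2+i))
  case hi =>
    intro i j hij
    simp only at hij
    by_contra hne
    rcases Nat.lt_or_ge i j with hlt | hge
    · have h1 : (2*k+2+i) - k + 1 ≤ (2*k+2+j) - k + 1 := by omega
      have h2 : ((2*k+2+i) - k + 1) * M ≤ ((2*k+2+j) - k + 1) * M := Nat.mul_le_mul_right _ h1
      have h3 : S11.Tnum k M (2*k+2+i) ≤ S11.Tnum k M (2*k+2+j) := by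
        unfold S11.Tnum; omega
      have h4 : S11.Tnum k M (2*k+2+i) * (k+1) ≤ S11.Tnum k M (2*k+2+j) * (k+1) :=
        Nat.mul_le_mul_right _ h3
      have : S11.nV k M (2*k+2+i) < S11.nV k M (2*k+2+j) := by
        unfold S11.nV; omega
      omega
    · have hlt : j < i := by omega
      have h1 : (2*k+2+j) - k + 1 ≤ (2*k+2+i) - k + 1 := by omega
      have h2 : ((2*k+2+j) - k + 1) * M ≤ ((2*k+2+i) - k + 1) * M := Nat.mul_le_mul_right _ h1
      have h3 : S11.Tnum k M (2*k+2+j) ≤ S11.Tnum k M (2*k+2+i) := by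
        unfold S11.Tnum; omega
      have h4 : S11.Tnum k M (2*k+2+j) * (k+1) ≤ S11.Tnum k M (2*k+2+i) * (k+1) :=
        Nat.mul_le_mul_right _ h3
      have : S11.nV k M (2*k+2+j) < S11.nV k M (2*k+2+i) := by
        unfold S11.nV; omega
      omega
  case hf =>
    intro i
    set m := 2*k+2+i with hmdef
    have hm : 2*k+2 ≤ m := by omega
    refine ⟨S11.GG k M m, S11.GG_isKTree hk hm, ?_⟩
    intro t ht S hdeg htw
    have hcount := S11.card_bound hk hm hd hM' ht S hdeg htw
    have hid := S11.real_id (t := t) (m := m) hk hm hd hM'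
    calc (S.card : ℝ) ≤ ((S11.Tnum k M m * (t+1) : ℕ) : ℝ) := by exact_mod_cast hcount
      _ = _ := hid
end

section
/- Let d ≥ 2 and let T be a tree on n ≥ 5 vertices with α_d(T) = ((d-1)n+2)/(2d-1). Let L(T) be the set of leaves of T and P(T) the set of degree-2 vertices of T. Then |P(T)| ≥ |L(T)|. -/
/-- `α_d(G)`: the maximum cardinality of a degree-`d` independent set of `G`. -/
noncomputable def alphaD {V : Type*} [Fintype V] (G : SimpleGraph V) (d : ℕ) : ℕ :=
  sSup {m : ℕ | ∃ S : Finset V,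
    (∀ v ∈ S, ∀ w ∈ S, ¬ G.Adj v w) ∧ (∀ v ∈ S, degN G v ≤ d) ∧ S.card = m}

open SimpleGraph Finset

section Aux

variable {V : Type*}

lemma reach_mem_of_closed (G : SimpleGraph V) (hpc : G.Preconnected) (S : Set V)
    (hcl : ∀ a ∈ S, ∀ w, G.Adj a w → w ∈ S) {u : V} (hu : u ∈ S) (x : V) : x ∈ S := by
  obtain ⟨p⟩ := hpc u x
  revert hu
  induction p with
  | nil => exact fun h => h
  | cons h q ih => exact fun hu => ih (hcl _ hu _ h)

lemma degN_eq_degree [Fintype V] (G : SimpleGraph V) [DecidableRel G.Adj] (v : V) :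
    degN G v = G.degree v := by
  rw [degN, ← Nat.card_coe_set_eq, Nat.card_eq_fintype_card,
    SimpleGraph.card_neighborSet_eq_degree]

lemma le_alphaD [Fintype V] (G : SimpleGraph V) (d : ℕ) (S : Finset V)
    (h1 : ∀ v ∈ S, ∀ w ∈ S, ¬ G.Adj v w) (h2 : ∀ v ∈ S, degN G v ≤ d) :
    S.card ≤ alphaD G d := by
  apply le_csSup
  · exact ⟨Fintype.card V, fun m hm => by
      obtain ⟨Q, -, -, hQ⟩ := hm; exact hQ ▸ Q.card_le_univ⟩
  · exact ⟨S, h1, h2, rfl⟩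

/-- In a tree, lengths of the unique paths to a fixed root have different parity
across an edge. -/
lemma tree_parity [Fintype V] [DecidableEq V] {T : SimpleGraph V} (hT : T.IsTree) (r : V)
    (f : ∀ v : V, T.Walk v r) (hf : ∀ v, (f v).IsPath)
    (hfu : ∀ v (q : T.Walk v r), q.IsPath → q = f v)
    {u v : V} (huv : T.Adj u v) : (f u).length % 2 ≠ (f v).length % 2 := by
  by_cases hmem : u ∈ (f v).support
  · have hdrop : (f v).dropUntil u hmem = f u := hfu u _ ((hf v).dropUntil hmem)
    have htake := hT.IsAcyclic.path_unique
      ⟨(f v).takeUntil u hmem, (hf v).takeUntil hmem⟩ (Path.singleton huv.symm)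
    have hlen : ((f v).takeUntil u hmem).length = 1 := by
      have := congrArg (fun p => (Subtype.val p).length) htake
      simpa [Path.singleton] using this
    have hspec := congrArg Walk.length ((f v).take_spec hmem)
    rw [Walk.length_append, hlen, hdrop] at hspec
    omega
  · have hcons : (Walk.cons huv (f v)).IsPath := by
      rw [Walk.cons_isPath_iff]; exact ⟨hf v, hmem⟩
    have := congrArg Walk.length (hfu u _ hcons)
    rw [Walk.length_cons] at this
    omega

end Aux

/-- Let `d ≥ 2` and let `T` be an `α_d`-extremal tree on `n ≥ 5` vertices,
i.e. `α_d(T) = ((d-1)n+2)/(2d-1)`. Then `T` has at least as many degree-2 vertices as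
leaves. -/
theorem stmt15 {V : Type*} [Fintype V] (d : ℕ) (hd : 2 ≤ d) (T : SimpleGraph V)
    (hT : T.IsTree) (hn : 5 ≤ Fintype.card V)
    (hext : (alphaD T d : ℝ)
      = (((d : ℝ) - 1) * Fintype.card V + 2) / (2 * (d : ℝ) - 1)) :
    {v : V | degN T v = 1}.ncard ≤ {v : V | degN T v = 2}.ncard := by
  classical
  set n := Fintype.card V with hndef
  have hconn := hT.isConnected
  have hpc : T.Preconnected := hconn.preconnected
  -- translate degN to degree
  have hdegN : ∀ v, degN T v = T.degree v := fun v => degN_eq_degree T v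
  -- minimum degree 1
  have hdeg1 : ∀ v, 1 ≤ T.degree v := by
    intro v
    obtain ⟨w, hw⟩ := Fintype.exists_ne_of_one_lt_card (by omega) v
    obtain ⟨p⟩ := hpc v w
    cases p with
    | nil => exact absurd rfl hw
    | cons h q => exact (T.degree_pos_iff_exists_adj v).2 ⟨_, h⟩
  -- a vertex of degree 1 has a unique neighbour
  have huniq : ∀ u w, T.degree u = 1 → T.Adj u w → ∀ x, T.Adj u x → x = w := by
    intro u w h1 hw x hx
    obtain ⟨b, hb⟩ := Finset.card_eq_one.mp (h1 : (T.neighborFinset u).card = 1)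
    have hwb : w ∈ ({b} : Finset V) := hb ▸ (T.mem_neighborFinset u w).mpr hw
    have hxb : x ∈ ({b} : Finset V) := hb ▸ (T.mem_neighborFinset u x).mpr hx
    simp only [Finset.mem_singleton] at hwb hxb
    rw [hxb, hwb]
  -- cardinality from a small closed set: used twice
  have hcard3 : ∀ (u s v : V), (∀ a ∈ ({u, s, v} : Set V), ∀ w, T.Adj a w →
      w ∈ ({u, s, v} : Set V)) → False := by
    intro u s v hcl
    have hall := reach_mem_of_closed T hpc _ hcl (by simp : u ∈ ({u, s, v} : Set V))
    have hsub : (Finset.univ : Finset V) ⊆ {u, s, v} := by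
      intro x _
      have := hall x
      simp only [Set.mem_insert_iff, Set.mem_singleton_iff] at this
      simp only [Finset.mem_insert, Finset.mem_singleton]
      exact this
    have : n ≤ 3 := by
      calc n = (Finset.univ : Finset V).card := Finset.card_univ.symm
        _ ≤ ({u, s, v} : Finset V).card := Finset.card_le_card hsub
        _ ≤ 3 := by
            refine (Finset.card_insert_le _ _).trans ?_
            have := Finset.card_insert_le s ({v} : Finset V)
            simp only [Finset.card_singleton] at this
            omega
    omega
  -- no two adjacent leaves
  have hleafadj : ∀ u v, T.degree u = 1 → T.degree v = 1 → ¬ T.Adj u v := by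
    intro u v hu hv huv
    refine hcard3 u u v ?_
    intro a ha w hw
    simp only [Set.mem_insert_iff, Set.mem_singleton_iff] at ha ⊢
    rcases ha with rfl | rfl | rfl
    · right; right; exact huniq a v hu huv w hw
    · right; right; exact huniq a v hu huv w hw
    · left; exact huniq a u hv huv.symm w hw
  -- the three degree classes
  set Lf := Finset.univ.filter (fun v => T.degree v = 1) with hLfdef
  set Mf := Finset.univ.filter (fun v => ¬ T.degree v = 1 ∧ T.degree v ≤ d) with hMfdef
  set Hf := Finset.univ.filter (fun v => ¬ T.degree v ≤ d) with hHfdef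
  set l := Lf.card
  set m := Mf.card
  set hh := Hf.card
  have hLMH : l + m + hh = n := by
    have h1 := Finset.card_filter_add_card_filter_not
      (s := (Finset.univ : Finset V)) (p := fun v => T.degree v ≤ d)
    have h2 := Finset.card_filter_add_card_filter_not
      (s := Finset.univ.filter (fun v => T.degree v ≤ d)) (p := fun v => T.degree v = 1)
    rw [Finset.filter_filter, Finset.filter_filter] at h2
    have hL' : Finset.univ.filter (fun v => T.degree v ≤ d ∧ T.degree v = 1) = Lf := by
      apply Finset.filter_congr
      intro v _
      constructor
      · exact fun h => h.2
      · intro h; exact ⟨by omega, h⟩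
    have hM' : Finset.univ.filter (fun v => T.degree v ≤ d ∧ ¬ T.degree v = 1) = Mf := by
      apply Finset.filter_congr
      intro v _
      tauto
    rw [hL', hM'] at h2
    rw [Finset.card_univ, ← hHfdef] at h1
    omega
  -- handshake
  have hStot : ∑ v, T.degree v + 2 = 2 * n := by
    have h1 := T.sum_degrees_eq_twice_card_edges
    have h2 := hT.card_edgeFinset
    omega
  have hsplit : ∑ v ∈ Lf, T.degree v + ∑ v ∈ Mf, T.degree v + ∑ v ∈ Hf, T.degree v
      = ∑ v, T.degree v := by
    have h1 := Finset.sum_filter_add_sum_filter_not (Finset.univ : Finset V)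
      (fun v => T.degree v ≤ d) (fun v => T.degree v)
    have h2 := Finset.sum_filter_add_sum_filter_not
      (Finset.univ.filter (fun v => T.degree v ≤ d))
      (fun v => T.degree v = 1) (fun v => T.degree v)
    rw [Finset.filter_filter, Finset.filter_filter] at h2
    have hL' : Finset.univ.filter (fun v => T.degree v ≤ d ∧ T.degree v = 1) = Lf := by
      apply Finset.filter_congr
      intro v _
      constructor
      · exact fun h => h.2
      · intro h; exact ⟨by omega, h⟩
    have hM' : Finset.univ.filter (fun v => T.degree v ≤ d ∧ ¬ T.degree v = 1) = Mf := by
      apply Finset.filter_congr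
      intro v _
      tauto
    rw [hL', hM'] at h2
    rw [← hHfdef] at h1
    omega
  have hSl : ∑ v ∈ Lf, T.degree v = l := by
    rw [show l = ∑ _v ∈ Lf, 1 by simp [l]]
    apply Finset.sum_congr rfl
    intro v hv
    simp only [hLfdef, Finset.mem_filter] at hv
    exact hv.2
  have hSm : 2 * m ≤ ∑ v ∈ Mf, T.degree v := by
    have := Finset.card_nsmul_le_sum Mf (fun v => T.degree v) 2 ?_
    · simpa [mul_comm] using this
    · intro v hv
      simp only [hMfdef, Finset.mem_filter] at hv
      have := hdeg1 v
      show 2 ≤ T.degree v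
      omega
  have hSh : (d + 1) * hh ≤ ∑ v ∈ Hf, T.degree v := by
    have := Finset.card_nsmul_le_sum Hf (fun v => T.degree v) (d + 1) ?_
    · simpa [mul_comm] using this
    · intro v hv
      simp only [hHfdef, Finset.mem_filter] at hv
      show d + 1 ≤ T.degree v
      omega
  -- alpha_d lower bounds
  set a := alphaD T d with hadef
  have halpha : ∀ S : Finset V, (∀ v ∈ S, ∀ w ∈ S, ¬ T.Adj v w) →
      (∀ v ∈ S, T.degree v ≤ d) → S.card ≤ a := by
    intro S h1 h2
    exact le_alphaD T d S h1 (fun v hv => by rw [hdegN]; exact h2 v hv)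
  -- leaves independent
  have hla : l ≤ a := by
    apply halpha
    · intro v hv w hw
      simp only [hLfdef, Finset.mem_filter] at hv hw
      exact hleafadj v w hv.2 hw.2
    · intro v hv
      simp only [hLfdef, Finset.mem_filter] at hv
      omega
  -- bipartition classes
  obtain ⟨r⟩ := hconn.nonempty
  choose f hf hfu using fun v => hT.existsUnique_path v r
  have hpar : ∀ {u v : V}, T.Adj u v → (f u).length % 2 ≠ (f v).length % 2 :=
    fun {u v} huv => tree_parity hT r f hf hfu huv
  set C0 := Finset.univ.filter (fun v => (f v).length % 2 = 0 ∧ T.degree v ≤ d) with hC0def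
  set C1 := Finset.univ.filter (fun v => ¬ (f v).length % 2 = 0 ∧ T.degree v ≤ d) with hC1def
  have hC0C1 : C0.card + C1.card = l + m := by
    have h1 := Finset.card_filter_add_card_filter_not
      (s := Finset.univ.filter (fun v => T.degree v ≤ d)) (p := fun v => (f v).length % 2 = 0)
    rw [Finset.filter_filter, Finset.filter_filter] at h1
    have e0 : Finset.univ.filter (fun v => T.degree v ≤ d ∧ (f v).length % 2 = 0) = C0 := by
      apply Finset.filter_congr; intro v _; tauto
    have e1 : Finset.univ.filter (fun v => T.degree v ≤ d ∧ ¬ (f v).length % 2 = 0) = C1 := by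
      apply Finset.filter_congr; intro v _; tauto
    have e2 : (Finset.univ.filter (fun v => T.degree v ≤ d)).card = l + m := by
      have h2 := Finset.card_filter_add_card_filter_not
        (s := Finset.univ.filter (fun v => T.degree v ≤ d)) (p := fun v => T.degree v = 1)
      rw [Finset.filter_filter, Finset.filter_filter] at h2
      have hL' : Finset.univ.filter (fun v => T.degree v ≤ d ∧ T.degree v = 1) = Lf := by
        apply Finset.filter_congr
        intro v _
        constructor
        · exact fun h => h.2
        · intro h; exact ⟨by omega, h⟩
      have hM' : Finset.univ.filter (fun v => T.degree v ≤ d ∧ ¬ T.degree v = 1) = Mf := by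
        apply Finset.filter_congr; intro v _; tauto
      rw [hL', hM'] at h2
      omega
    rw [e0, e1] at h1
    omega
  have hC0a : C0.card ≤ a := by
    apply halpha
    · intro v hv w hw hvw
      simp only [hC0def, Finset.mem_filter] at hv hw
      exact hpar hvw (by rw [hv.2.1, hw.2.1])
    · intro v hv
      simp only [hC0def, Finset.mem_filter] at hv
      exact hv.2.2
  have hC1a : C1.card ≤ a := by
    apply halpha
    · intro v hv w hw hvw
      simp only [hC1def, Finset.mem_filter] at hv hw
      have h1 : (f v).length % 2 = 1 := by omega
      have h2 : (f w).length % 2 = 1 := by omega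
      exact hpar hvw (by rw [h1, h2])
    · intro v hv
      simp only [hC1def, Finset.mem_filter] at hv
      exact hv.2.2
  -- the extremal equation, over ℝ
  have hD2 : (2:ℝ) ≤ (d:ℝ) := by exact_mod_cast hd
  have hDne : 2 * (d:ℝ) - 1 ≠ 0 := by linarith
  have hE : (a:ℝ) * (2 * (d:ℝ) - 1) = ((d:ℝ) - 1) * (n:ℝ) + 2 := by
    rw [hext]
    field_simp
    exact mul_div_cancel_right₀ _ (by linarith)
  -- real versions of the counting facts
  have hc1 : (l:ℝ) + (m:ℝ) + (hh:ℝ) = (n:ℝ) := by exact_mod_cast hLMH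
  have hc2 : (l:ℝ) ≥ ((d:ℝ) - 1) * (hh:ℝ) + 2 := by
    have hSmr : (2:ℝ) * (m:ℝ) ≤ ((∑ v ∈ Mf, T.degree v : ℕ) : ℝ) := by exact_mod_cast hSm
    have hShr : ((d:ℝ) + 1) * (hh:ℝ) ≤ ((∑ v ∈ Hf, T.degree v : ℕ) : ℝ) := by
      exact_mod_cast hSh
    have hsplitr : ((∑ v ∈ Lf, T.degree v : ℕ) : ℝ) + ((∑ v ∈ Mf, T.degree v : ℕ) : ℝ)
        + ((∑ v ∈ Hf, T.degree v : ℕ) : ℝ) = ((∑ v, T.degree v : ℕ) : ℝ) := by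
      exact_mod_cast hsplit
    have hStotr : ((∑ v, T.degree v : ℕ) : ℝ) + 2 = 2 * (n:ℝ) := by exact_mod_cast hStot
    have hSlr : ((∑ v ∈ Lf, T.degree v : ℕ) : ℝ) = (l:ℝ) := by exact_mod_cast hSl
    linarith only [hSmr, hShr, hsplitr, hStotr, hSlr, hc1]
  have hc3 : (n:ℝ) - (hh:ℝ) ≤ 2 * (a:ℝ) := by
    have h1 : (C0.card:ℝ) + (C1.card:ℝ) = (l:ℝ) + (m:ℝ) := by exact_mod_cast hC0C1
    have h2 : (C0.card:ℝ) ≤ (a:ℝ) := by exact_mod_cast hC0a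
    have h3 : (C1.card:ℝ) ≤ (a:ℝ) := by exact_mod_cast hC1a
    linarith
  have hlar : (l:ℝ) ≤ (a:ℝ) := by exact_mod_cast hla
  -- equality analysis
  have ht3 : (0:ℝ) ≤ 2 * (a:ℝ) - ((n:ℝ) - (hh:ℝ)) := by linarith
  have hp1 : ((d:ℝ) - 1) * (2 * (a:ℝ) - ((n:ℝ) - (hh:ℝ))) ≥ 0 :=
    mul_nonneg (by linarith) ht3
  have hp2 : ((d:ℝ) - 2) * (2 * (a:ℝ) - ((n:ℝ) - (hh:ℝ))) ≥ 0 :=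
    mul_nonneg (by linarith) ht3
  have heq1 : (a:ℝ) = (l:ℝ) := by
    linarith only [hE, hc2, hc3, hlar, hp1, hp2, hD2]
  have heq2 : (l:ℝ) = ((d:ℝ) - 1) * (hh:ℝ) + 2 := by
    linarith only [hE, hc2, hc3, hlar, hp1, hp2, hD2]
  have heq3 : 2 * (a:ℝ) = (n:ℝ) - (hh:ℝ) := by
    linarith only [hE, hc2, hc3, hlar, hp1, hp2, hD2]
  -- C0 and C1 both have size a
  have hC0eq : C0.card = a := by
    have h1 : (C0.card:ℝ) + (C1.card:ℝ) = (l:ℝ) + (m:ℝ) := by exact_mod_cast hC0C1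
    have h3 : (C1.card:ℝ) ≤ (a:ℝ) := by exact_mod_cast hC1a
    have : (C0.card:ℝ) = (a:ℝ) := by
      have h2 : (C0.card:ℝ) ≤ (a:ℝ) := by exact_mod_cast hC0a
      linarith
    exact_mod_cast this
  have hC1eq : C1.card = a := by
    have h1 : (C0.card:ℝ) + (C1.card:ℝ) = (l:ℝ) + (m:ℝ) := by exact_mod_cast hC0C1
    have h2 : (C0.card:ℝ) ≤ (a:ℝ) := by exact_mod_cast hC0a
    have h3 : (C1.card:ℝ) ≤ (a:ℝ) := by exact_mod_cast hC1a
    have : (C1.card:ℝ) = (a:ℝ) := by linarith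
    exact_mod_cast this
  -- all mid vertices have degree exactly 2
  have hSm2 : ∑ v ∈ Mf, T.degree v ≤ 2 * m := by
    have hShr : ((d:ℝ) + 1) * (hh:ℝ) ≤ ((∑ v ∈ Hf, T.degree v : ℕ) : ℝ) := by
      exact_mod_cast hSh
    have hsplitr : ((∑ v ∈ Lf, T.degree v : ℕ) : ℝ) + ((∑ v ∈ Mf, T.degree v : ℕ) : ℝ)
        + ((∑ v ∈ Hf, T.degree v : ℕ) : ℝ) = ((∑ v, T.degree v : ℕ) : ℝ) := by
      exact_mod_cast hsplit
    have hStotr : ((∑ v, T.degree v : ℕ) : ℝ) + 2 = 2 * (n:ℝ) := by exact_mod_cast hStot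
    have hSlr : ((∑ v ∈ Lf, T.degree v : ℕ) : ℝ) = (l:ℝ) := by exact_mod_cast hSl
    have : ((∑ v ∈ Mf, T.degree v : ℕ) : ℝ) ≤ 2 * (m:ℝ) := by
      linarith only [hShr, hsplitr, hStotr, hSlr, hc1, heq2]
    exact_mod_cast this
  have hmid2 : ∀ v ∈ Mf, T.degree v = 2 := by
    by_contra hcon
    push_neg at hcon
    obtain ⟨v, hv, hne⟩ := hcon
    have h3 : 3 ≤ T.degree v := by
      have hv' := hv
      simp only [hMfdef, Finset.mem_filter] at hv'
      have := hdeg1 v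
      omega
    have hrest : 2 * (Mf.erase v).card ≤ ∑ w ∈ Mf.erase v, T.degree w := by
      have := Finset.card_nsmul_le_sum (Mf.erase v) (fun w => T.degree w) 2 ?_
      · simpa [mul_comm] using this
      · intro w hw
        have hw' := Finset.mem_of_mem_erase hw
        simp only [hMfdef, Finset.mem_filter] at hw'
        have := hdeg1 w
        show 2 ≤ T.degree w
        omega
    have hsum : ∑ w ∈ Mf.erase v, T.degree w + T.degree v = ∑ w ∈ Mf, T.degree w :=
      Finset.sum_erase_add Mf _ hv
    have hcm : (Mf.erase v).card = m - 1 := by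
      rw [Finset.card_erase_of_mem hv]
    have hm1 : 1 ≤ m := Finset.card_pos.mpr ⟨v, hv⟩
    omega
  -- no leaf is adjacent to a high-degree vertex
  have hleafnb : ∀ u s, T.degree u = 1 → T.Adj u s → T.degree s ≤ d := by
    intro u s hu hus
    by_contra hhigh
    push_neg at hhigh
    -- u is adjacent only to s
    by_cases hpu : (f u).length % 2 = 0
    · -- use C1
      have hunotm : u ∉ C1 := by
        simp only [hC1def, Finset.mem_filter]
        tauto
      have hcard : (insert u C1).card = a + 1 := by
        rw [Finset.card_insert_of_notMem hunotm, hC1eq]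
      have : (insert u C1).card ≤ a := by
        apply halpha
        · intro x hx y hy hxy
          rcases Finset.mem_insert.mp hx with rfl | hx' <;>
            rcases Finset.mem_insert.mp hy with rfl | hy'
          · exact T.irrefl hxy
          · have := huniq x s hu hus y hxy
            subst this
            simp only [hC1def, Finset.mem_filter] at hy'
            omega
          · have := huniq y s hu hus x hxy.symm
            subst this
            simp only [hC1def, Finset.mem_filter] at hx'
            omega
          · simp only [hC1def, Finset.mem_filter] at hx' hy'
            have h1 : (f x).length % 2 = 1 := by omega
            have h2 : (f y).length % 2 = 1 := by omega
            exact hpar hxy (by rw [h1, h2])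
        · intro x hx
          rcases Finset.mem_insert.mp hx with rfl | hx'
          · omega
          · simp only [hC1def, Finset.mem_filter] at hx'
            exact hx'.2.2
      omega
    · -- use C0
      have hunotm : u ∉ C0 := by
        simp only [hC0def, Finset.mem_filter]
        tauto
      have hcard : (insert u C0).card = a + 1 := by
        rw [Finset.card_insert_of_notMem hunotm, hC0eq]
      have : (insert u C0).card ≤ a := by
        apply halpha
        · intro x hx y hy hxy
          rcases Finset.mem_insert.mp hx with rfl | hx' <;>
            rcases Finset.mem_insert.mp hy with rfl | hy'
          · exact T.irrefl hxy
          · have := huniq x s hu hus y hxy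
            subst this
            simp only [hC0def, Finset.mem_filter] at hy'
            omega
          · have := huniq y s hu hus x hxy.symm
            subst this
            simp only [hC0def, Finset.mem_filter] at hx'
            omega
          · simp only [hC0def, Finset.mem_filter] at hx' hy'
            exact hpar hxy (by rw [hx'.2.1, hy'.2.1])
        · intro x hx
          rcases Finset.mem_insert.mp hx with rfl | hx'
          · omega
          · simp only [hC0def, Finset.mem_filter] at hx'
            exact hx'.2.2
      omega
  -- every support vertex has degree exactly 2
  have hsup2 : ∀ u s, T.degree u = 1 → T.Adj u s → T.degree s = 2 := by
    intro u s hu hus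
    have hle : T.degree s ≤ d := hleafnb u s hu hus
    have hne1 : ¬ T.degree s = 1 := fun h1 => hleafadj u s hu h1 hus
    exact hmid2 s (by simp only [hMfdef, Finset.mem_filter]; exact ⟨Finset.mem_univ s, hne1, hle⟩)
  -- the injection from leaves to degree-2 vertices
  set g : V → V := fun u => if h : ∃ w, T.Adj u w then h.choose else u with hgdef
  have hgadj : ∀ u, T.degree u = 1 → T.Adj u (g u) := by
    intro u hu
    have hex : ∃ w, T.Adj u w := (T.degree_pos_iff_exists_adj u).1 (by omega)
    simp only [hgdef, dif_pos hex]
    exact hex.choose_spec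
  -- conclude
  have hcards : Lf.card ≤ (Finset.univ.filter (fun v => T.degree v = 2)).card := by
    apply Finset.card_le_card_of_injOn g
    · intro u hu
      simp only [hLfdef, Finset.mem_coe, Finset.mem_filter] at hu
      simp only [Finset.mem_coe, Finset.mem_filter]
      exact ⟨Finset.mem_univ _, hsup2 u (g u) hu.2 (hgadj u hu.2)⟩
    · intro u1 hu1 u2 hu2 hg12
      simp only [hLfdef, Finset.coe_filter, Set.mem_setOf_eq] at hu1 hu2
      by_contra hne
      set s := g u1 with hsdef
      have ha1 : T.Adj u1 s := hgadj u1 hu1.2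
      have ha2 : T.Adj u2 s := hg12 ▸ hgadj u2 hu2.2
      have hs2 : T.degree s = 2 := hsup2 u1 s hu1.2 ha1
      -- neighborFinset s = {u1, u2}
      have hNsub : ({u1, u2} : Finset V) ⊆ T.neighborFinset s := by
        intro x hx
        rcases Finset.mem_insert.mp hx with rfl | hx'
        · exact (T.mem_neighborFinset s x).mpr ha1.symm
        · rw [Finset.mem_singleton] at hx'
          subst hx'
          exact (T.mem_neighborFinset s x).mpr ha2.symm
      have hcard2 : ({u1, u2} : Finset V).card = 2 := Finset.card_pair hne
      have hNeq : ({u1, u2} : Finset V) = T.neighborFinset s :=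
        Finset.eq_of_subset_of_card_le hNsub (by rw [hcard2]; exact le_of_eq hs2)
      have hNadj : ∀ x, T.Adj s x → x = u1 ∨ x = u2 := by
        intro x hx
        have : x ∈ ({u1, u2} : Finset V) := hNeq ▸ (T.mem_neighborFinset s x).mpr hx
        simpa using this
      refine hcard3 u1 s u2 ?_
      intro b hb w hw
      simp only [Set.mem_insert_iff, Set.mem_singleton_iff] at hb ⊢
      rcases hb with rfl | rfl | rfl
      · right; left; exact huniq b s hu1.2 ha1 w hw
      · rcases hNadj w hw with h | h
        · left; exact h
        · right; right; exact h
      · right; left; exact huniq b s hu2.2 ha2 w hw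
  -- rewrite the goal
  have hset1 : {v : V | degN T v = 1} = {v : V | T.degree v = 1} := by
    ext v; simp [hdegN]
  have hset2 : {v : V | degN T v = 2} = {v : V | T.degree v = 2} := by
    ext v; simp [hdegN]
  rw [hset1, hset2, Set.ncard_eq_toFinset_card', Set.ncard_eq_toFinset_card',
    Set.toFinset_setOf, Set.toFinset_setOf]
  exact hcards
end

section
/- Let G be an interval graph with clique number ω(G) ≤ k+1, given by an interval representation assigning to each vertex v a closed interval [L(v), R(v)] ⊆ ℝ with all 2|V(G)| endpoints distinct, such that vw is an edge if and only if the intervals of v and w intersect. If G has a vertex v with deg(v) ≥ 2k+1, then there is a vertex w with L(v) < L(w) < R(w) < R(v) (i.e., w is dominated by v) and deg(w) ≤ 2k-1. -/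
theorem clique_ncard_le {V : Type*} (G : SimpleGraph V) (n : ℕ) (s : Set V) (hs : s.Finite)
    (hc : G.IsClique s) (hf : G.CliqueFree (n + 1)) : s.ncard ≤ n := by
  by_contra h
  push_neg at h
  obtain ⟨t, hts, htc⟩ := Set.exists_subset_card_eq (by omega : n + 1 ≤ s.ncard)
  have htf : t.Finite := hs.subset hts
  exact hf htf.toFinset (by
    constructor
    · intro a ha b hb hab
      simp only [Set.Finite.coe_toFinset] at ha hb
      exact hc (hts ha) (hts hb) hab
    · rw [← htc, ← Set.ncard_coe_finset, Set.Finite.coe_toFinset])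

/-- Let `G` be an interval graph with clique number at most `k+1`, given by
an interval representation `v ↦ [L v, R v]` with all `2|V|` endpoints distinct, where `v` and
`w` are adjacent iff their intervals intersect. If `v` is a vertex with `deg v ≥ 2k+1`, then
some vertex `w` is dominated by `v` (i.e. `L v < L w < R w < R v`) and has `deg w ≤ 2k-1`. -/
theorem stmt18 {V : Type*} [Fintype V] (k : ℕ) (G : SimpleGraph V)
    (L R : V → ℝ) (hLR : ∀ v : V, L v < R v)
    (hadj : ∀ v w : V, G.Adj v w ↔
      v ≠ w ∧ (Set.Icc (L v) (R v) ∩ Set.Icc (L w) (R w)).Nonempty)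
    (hdistinct : ∀ v w : V,
      (L v = L w → v = w) ∧ (R v = R w → v = w) ∧ L v ≠ R w)
    (hclique : G.CliqueFree (k + 2))
    (v : V) (hv : 2 * k + 1 ≤ degN G v) :
    ∃ w : V, L v < L w ∧ R w < R v ∧ degN G w ≤ 2 * k - 1 := by
  classical
  -- all intervals containing a common point form a clique of size at most k+1
  have key : ∀ p : ℝ, ({u : V | L u ≤ p ∧ p ≤ R u}).ncard ≤ k + 1 := by
    intro p
    refine clique_ncard_le G (k + 1) _ (Set.toFinite _) ?_ hclique
    intro a ha b hb hab
    exact (hadj a b).2 ⟨hab, ⟨p, ⟨ha.1, ha.2⟩, ⟨hb.1, hb.2⟩⟩⟩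
  -- trichotomy for a neighbour u of w
  have nb : ∀ w u : V, G.Adj w u →
      (L u < L w ∧ L w ≤ R u) ∨ (L w < L u ∧ L u ≤ R w ∧ R w < R u) ∨
      (L w < L u ∧ R u < R w) := by
    intro w u hwu
    obtain ⟨hne, x, ⟨hx1, hx2⟩, hx3, hx4⟩ := (hadj w u).1 hwu
    have hLL : L u ≠ L w := fun h => hne ((hdistinct u w).1 h).symm
    have hRR : R u ≠ R w := fun h => hne ((hdistinct u w).2.1 h).symm
    rcases lt_or_gt_of_ne hLL with h1 | h1
    · exact Or.inl ⟨h1, le_trans hx1 hx4⟩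
    · rcases lt_or_gt_of_ne hRR with h2 | h2
      · exact Or.inr (Or.inr ⟨h1, h2⟩)
      · exact Or.inr (Or.inl ⟨h1, le_trans hx3 hx2, h2⟩)
  -- the set of vertices dominated by v is nonempty
  set S : Set V := {w | L v < L w ∧ R w < R v} with hS
  have hSne : S.Nonempty := by
    by_contra hempty
    rw [Set.not_nonempty_iff_eq_empty] at hempty
    have hsub : G.neighborSet v ⊆
        ({u : V | L u ≤ L v ∧ L v ≤ R u} \ {v}) ∪ ({u : V | L u ≤ R v ∧ R v ≤ R u} \ {v}) := by
      intro u hu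
      have hadjvu : G.Adj v u := hu
      have hne : u ≠ v := fun h => (G.irrefl (h ▸ hadjvu))
      rcases nb v u hadjvu with ⟨h1, h2⟩ | ⟨h1, h2, h3⟩ | ⟨h1, h2⟩
      · exact Or.inl ⟨⟨le_of_lt h1, h2⟩, hne⟩
      · exact Or.inr ⟨⟨h2, le_of_lt h3⟩, hne⟩
      · exact absurd (show u ∈ S from ⟨h1, h2⟩)
          (by rw [hempty]; exact Set.notMem_empty u)
    have hdeg : degN G v ≤ k + k := by
      calc degN G v ≤ (({u : V | L u ≤ L v ∧ L v ≤ R u} \ {v}) ∪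
            ({u : V | L u ≤ R v ∧ R v ≤ R u} \ {v})).ncard :=
            Set.ncard_le_ncard hsub (Set.toFinite _)
        _ ≤ ({u : V | L u ≤ L v ∧ L v ≤ R u} \ {v}).ncard +
            ({u : V | L u ≤ R v ∧ R v ≤ R u} \ {v}).ncard := Set.ncard_union_le _ _
        _ ≤ k + k := by
            have h1 : ({u : V | L u ≤ L v ∧ L v ≤ R u} \ {v}).ncard =
                ({u : V | L u ≤ L v ∧ L v ≤ R u}).ncard - 1 :=
              Set.ncard_diff_singleton_of_mem ⟨le_refl _, le_of_lt (hLR v)⟩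
            have h2 : ({u : V | L u ≤ R v ∧ R v ≤ R u} \ {v}).ncard =
                ({u : V | L u ≤ R v ∧ R v ≤ R u}).ncard - 1 :=
              Set.ncard_diff_singleton_of_mem ⟨le_of_lt (hLR v), le_refl _⟩
            have := key (L v); have := key (R v)
            omega
    omega
  -- pick a dominated vertex with minimal interval length
  obtain ⟨w, hwS, hwmin⟩ := Set.exists_min_image S (fun u => R u - L u) (Set.toFinite _) hSne
  obtain ⟨hw1, hw2⟩ := hwS
  refine ⟨w, hw1, hw2, ?_⟩
  have hvw : v ≠ w := fun h => lt_irrefl (L v) (h ▸ hw1)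
  -- every neighbour of w contains L w, or contains R w (and is not v)
  have hsub : G.neighborSet w ⊆
      ({u : V | L u ≤ L w ∧ L w ≤ R u} \ {w}) ∪
      (({u : V | L u ≤ R w ∧ R w ≤ R u} \ {w}) \ {v}) := by
    intro u hu
    have hadjwu : G.Adj w u := hu
    have hne : u ≠ w := fun h => (G.irrefl (h ▸ hadjwu))
    rcases nb w u hadjwu with ⟨h1, h2⟩ | ⟨h1, h2, h3⟩ | ⟨h1, h2⟩
    · exact Or.inl ⟨⟨le_of_lt h1, h2⟩, hne⟩
    · refine Or.inr ⟨⟨⟨h2, le_of_lt h3⟩, hne⟩, ?_⟩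
      intro h; subst h
      exact absurd (lt_trans hw1 h1) (lt_irrefl _)
    · -- u is dominated by w, contradicting minimality
      exfalso
      have huS : u ∈ S := ⟨lt_trans hw1 h1, lt_trans h2 hw2⟩
      have := hwmin u huS
      linarith
  have hA : ({u : V | L u ≤ L w ∧ L w ≤ R u} \ {w}).ncard ≤ k := by
    have h1 : ({u : V | L u ≤ L w ∧ L w ≤ R u} \ {w}).ncard =
        ({u : V | L u ≤ L w ∧ L w ≤ R u}).ncard - 1 :=
      Set.ncard_diff_singleton_of_mem ⟨le_refl _, le_of_lt (hLR w)⟩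
    have := key (L w)
    omega
  have hB : (({u : V | L u ≤ R w ∧ R w ≤ R u} \ {w}) \ {v}).ncard ≤ k - 1 := by
    have hvmem : v ∈ ({u : V | L u ≤ R w ∧ R w ≤ R u} \ {w}) :=
      ⟨⟨le_of_lt (lt_trans hw1 (hLR w)), le_of_lt hw2⟩, hvw⟩
    have h1 : (({u : V | L u ≤ R w ∧ R w ≤ R u} \ {w}) \ {v}).ncard =
        ({u : V | L u ≤ R w ∧ R w ≤ R u} \ {w}).ncard - 1 :=
      Set.ncard_diff_singleton_of_mem hvmem
    have h2 : ({u : V | L u ≤ R w ∧ R w ≤ R u} \ {w}).ncard =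
        ({u : V | L u ≤ R w ∧ R w ≤ R u}).ncard - 1 :=
      Set.ncard_diff_singleton_of_mem ⟨le_of_lt (hLR w), le_refl _⟩
    have := key (R w)
    omega
  have : degN G w ≤ k + (k - 1) := by
    calc degN G w ≤ _ := Set.ncard_le_ncard hsub (Set.toFinite _)
      _ ≤ _ := Set.ncard_union_le _ _
      _ ≤ k + (k - 1) := add_le_add hA hB
  omega
end

section
/- Every interval graph G with clique number ω(G) ≤ k+1 has a maximum independent set in which every vertex has degree at most 2k; that is, α_{2k}(G) = α(G). -/
/-- `α(G)`: the maximum cardinality of an independent set of `G`. -/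
noncomputable def alphaN {V : Type*} [Fintype V] (G : SimpleGraph V) : ℕ :=
  sSup {m : ℕ | ∃ S : Finset V, (∀ v ∈ S, ∀ w ∈ S, ¬ G.Adj v w) ∧ S.card = m}

/-- A clique in a `(k+2)`-clique-free graph has at most `k+1` vertices. -/
lemma clique_card_le {V : Type*} {G : SimpleGraph V} {k : ℕ}
    (hclique : G.CliqueFree (k + 2)) {t : Finset V} (ht : G.IsClique (t : Set V)) :
    t.card ≤ k + 1 := by
  by_contra h
  push_neg at h
  obtain ⟨u, hu, hucard⟩ := Finset.exists_subset_card_eq (h : k + 2 ≤ t.card)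
  exact hclique u ⟨ht.subset (by exact_mod_cast hu), hucard⟩

/-- Every interval graph `G` with clique number at most `k+1` has a maximum
independent set in which every vertex has degree at most `2k`; that is,
`α_{2k}(G) = α(G)`. -/
theorem stmt19 {V : Type*} [Fintype V] (k : ℕ) (G : SimpleGraph V)
    (hint : ∃ L R : V → ℝ, (∀ v : V, L v ≤ R v) ∧
      ∀ v w : V, G.Adj v w ↔
        v ≠ w ∧ (Set.Icc (L v) (R v) ∩ Set.Icc (L w) (R w)).Nonempty)
    (hclique : G.CliqueFree (k + 2)) :
    alphaD G (2 * k) = alphaN G := by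
  classical
  obtain ⟨L, R, hLR, hadj⟩ := hint
  set TD : Set ℕ := {m : ℕ | ∃ S : Finset V,
    (∀ v ∈ S, ∀ w ∈ S, ¬ G.Adj v w) ∧ (∀ v ∈ S, degN G v ≤ 2 * k) ∧ S.card = m} with hTD
  set TN : Set ℕ := {m : ℕ | ∃ S : Finset V,
    (∀ v ∈ S, ∀ w ∈ S, ¬ G.Adj v w) ∧ S.card = m} with hTN
  have hTDne : TD.Nonempty := ⟨0, ∅, by simp, by simp, by simp⟩
  have hTNne : TN.Nonempty := ⟨0, ∅, by simp, by simp⟩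
  have hTNbdd : BddAbove TN := by
    refine ⟨Fintype.card V, fun m hm => ?_⟩
    obtain ⟨S, _, hc⟩ := hm
    exact hc ▸ S.card_le_univ
  have hTDbdd : BddAbove TD := by
    refine ⟨Fintype.card V, fun m hm => ?_⟩
    obtain ⟨S, _, _, hc⟩ := hm
    exact hc ▸ S.card_le_univ
  have hle : alphaD G (2 * k) ≤ alphaN G := by
    apply csSup_le_csSup hTNbdd hTDne
    rintro m ⟨S, h1, _, h3⟩
    exact ⟨S, h1, h3⟩
  refine le_antisymm hle ?_
  -- get a maximum independent set
  have hmem : alphaN G ∈ TN := Nat.sSup_mem hTNne hTNbdd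
  obtain ⟨S₀, hS₀ind, hS₀card⟩ := hmem
  -- minimize total interval length among maximum independent sets
  set F : Finset (Finset V) := Finset.univ.filter
    (fun S => (∀ v ∈ S, ∀ w ∈ S, ¬ G.Adj v w) ∧ S.card = alphaN G) with hF
  have hS₀F : S₀ ∈ F := by
    simp only [hF, Finset.mem_filter, Finset.mem_univ, true_and]
    exact ⟨hS₀ind, hS₀card⟩
  obtain ⟨S, hSF, hmin⟩ := F.exists_min_image (fun S => ∑ v ∈ S, (R v - L v)) ⟨S₀, hS₀F⟩
  simp only [hF, Finset.mem_filter, Finset.mem_univ, true_and] at hSF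
  obtain ⟨hSind, hScard⟩ := hSF
  -- every vertex of S has degree ≤ 2k
  have hdeg : ∀ v ∈ S, degN G v ≤ 2 * k := by
    intro v hv
    -- no neighbor's interval is strictly inside v's interval
    have hno : ∀ w, G.Adj v w → ¬ (L v < L w ∧ R w < R v) := by
      rintro w hw ⟨h1, h2⟩
      have hwv : w ≠ v := fun h => G.irrefl (h ▸ hw)
      have hwS : w ∉ S := fun h => hSind v hv w h hw
      set S' : Finset V := insert w (S.erase v) with hS'
      have hwE : w ∉ S.erase v := fun h => hwS (Finset.mem_of_mem_erase h)
      have hcard' : S'.card = alphaN G := by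
        rw [hS', Finset.card_insert_of_notMem hwE, Finset.card_erase_of_mem hv, hScard]
        have : 1 ≤ alphaN G := by
          rw [← hScard]; exact Finset.card_pos.mpr ⟨v, hv⟩
        omega
      -- S' is independent
      have hind' : ∀ a ∈ S', ∀ b ∈ S', ¬ G.Adj a b := by
        have key : ∀ b ∈ S.erase v, ¬ G.Adj w b := by
          intro b hb hab
          have hbv : b ≠ v := Finset.ne_of_mem_erase hb
          have hbS : b ∈ S := Finset.mem_of_mem_erase hb
          obtain ⟨hne, x, hx1, hx2⟩ := (hadj w b).mp hab
          have : G.Adj v b := by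
            rw [hadj]
            refine ⟨hbv.symm, x, ?_, hx2⟩
            obtain ⟨hl, hr⟩ := hx1
            exact ⟨le_trans (le_of_lt h1) hl, le_trans hr (le_of_lt h2)⟩
          exact hSind v hv b hbS this
        intro a ha b hb hab
        rw [hS', Finset.mem_insert] at ha hb
        rcases ha with ha | ha <;> rcases hb with hb | hb
        · exact G.irrefl (ha ▸ hb ▸ hab)
        · exact key b hb (ha ▸ hab)
        · exact key a ha (hb ▸ hab.symm)
        · exact hSind a (Finset.mem_of_mem_erase ha) b (Finset.mem_of_mem_erase hb) hab
      have hS'F : S' ∈ F := by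
        simp only [hF, Finset.mem_filter, Finset.mem_univ, true_and]
        exact ⟨hind', hcard'⟩
      have := hmin S' hS'F
      -- but the total length strictly decreased
      have hsum : ∑ u ∈ S', (R u - L u) < ∑ u ∈ S, (R u - L u) := by
        rw [hS', Finset.sum_insert hwE]
        rw [← Finset.add_sum_erase S (fun u => R u - L u) hv]
        have : R w - L w < R v - L v := by linarith
        linarith
      linarith
    -- cliques at the endpoints
    set A : Finset V := Finset.univ.filter
      (fun w => G.Adj v w ∧ L w ≤ L v ∧ L v ≤ R w) with hA
    set B : Finset V := Finset.univ.filter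
      (fun w => G.Adj v w ∧ L w ≤ R v ∧ R v ≤ R w) with hB
    have hvA : v ∉ A := by simp [hA]
    have hvB : v ∉ B := by simp [hB]
    have cliqueOf : ∀ (p : ℝ) (C : Finset V),
        (∀ w ∈ C, G.Adj v w ∧ L w ≤ p ∧ p ≤ R w) → L v ≤ p → p ≤ R v →
        G.IsClique ((insert v C : Finset V) : Set V) := by
      intro p C hC hp1 hp2
      intro a ha b hb hne
      simp only [Finset.coe_insert, Set.mem_insert_iff, Finset.mem_coe] at ha hb
      have mem : ∀ c, c = v ∨ c ∈ C → L c ≤ p ∧ p ≤ R c := by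
        rintro c (rfl | hc)
        · exact ⟨hp1, hp2⟩
        · exact (hC c hc).2
      rcases ha with rfl | ha
      · rcases hb with rfl | hb
        · exact absurd rfl hne
        · exact (hC b hb).1
      · rcases hb with rfl | hb
        · exact ((hC a ha).1).symm
        · rw [hadj]
          exact ⟨hne, p, mem a (Or.inr ha), mem b (Or.inr hb)⟩
    have hAcard : A.card ≤ k := by
      have hcl := cliqueOf (L v) A (fun w hw => by
        simpa [hA] using (Finset.mem_filter.mp hw).2) le_rfl (hLR v)
      have := clique_card_le hclique hcl
      rw [Finset.card_insert_of_notMem hvA] at this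
      omega
    have hBcard : B.card ≤ k := by
      have hcl := cliqueOf (R v) B (fun w hw => by
        simpa [hB] using (Finset.mem_filter.mp hw).2) (hLR v) le_rfl
      have := clique_card_le hclique hcl
      rw [Finset.card_insert_of_notMem hvB] at this
      omega
    -- the neighborhood is covered by A ∪ B
    have hsub : G.neighborSet v ⊆ ↑(A ∪ B) := by
      intro w hw
      have hw' : G.Adj v w := hw
      obtain ⟨hne, x, hx1, hx2⟩ := (hadj v w).mp hw'
      have hLwRv : L w ≤ R v := le_trans hx2.1 hx1.2
      have hLvRw : L v ≤ R w := le_trans hx1.1 hx2.2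
      simp only [Finset.coe_union, Set.mem_union, Finset.mem_coe, hA, hB,
        Finset.mem_filter, Finset.mem_univ, true_and]
      by_cases h1 : L w ≤ L v
      · exact Or.inl ⟨hw', h1, hLvRw⟩
      · by_cases h2 : R v ≤ R w
        · exact Or.inr ⟨hw', hLwRv, h2⟩
        · push_neg at h1 h2
          exact absurd ⟨h1, h2⟩ (hno w hw')
    calc degN G v ≤ (↑(A ∪ B) : Set V).ncard :=
          Set.ncard_le_ncard hsub (A ∪ B).finite_toSet
      _ = (A ∪ B).card := Set.ncard_coe_finset _
      _ ≤ A.card + B.card := Finset.card_union_le A B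
      _ ≤ 2 * k := by omega
  -- conclude
  have : alphaN G ∈ TD := ⟨S, hSind, hdeg, hScard⟩
  exact le_csSup hTDbdd this
end
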